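/- For all u ∈ (0,1): 2u/√(u²+4) ≥ arsinh u ≥ u/2 + u/(2√(u²+1)). -/

import Mathlib

open Real Set

private lemma hd1 (u : ℝ) :
    HasDerivAt (fun x : ℝ => Real.arsinh x - (x / 2 + x / (2 * Real.sqrt (x ^ 2 + 1))))
      ((Real.sqrt (u ^ 2 + 1) - 1) * (Real.sqrt (u ^ 2 + 1) - u ^ 2) /
        (2 * Real.sqrt (u ^ 2 + 1) ^ 3)) u := by
  set s := Real.sqrt (u ^ 2 + 1) with hs
  have hsp : 0 < s := Real.sqrt_pos.2 (by positivity)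
  have hs2 : s ^ 2 = u ^ 2 + 1 := Real.sq_sqrt (by positivity)
  have h1 : HasDerivAt (fun x : ℝ => x ^ 2 + 1) (2 * u) u := by
    simpa using (hasDerivAt_pow 2 u).add_const 1
  have h2 : HasDerivAt (fun x : ℝ => Real.sqrt (x ^ 2 + 1)) (u / s) u := by
    have := (Real.hasDerivAt_sqrt (by positivity : (u^2+1) ≠ 0)).comp u h1
    refine this.congr_deriv ?_
    rw [← hs]; field_simp
  have h3 : HasDerivAt (fun x : ℝ => x / (2 * Real.sqrt (x ^ 2 + 1)))
      ((1 * (2 * s) - u * (2 * (u / s))) / (2 * s) ^ 2) u :=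
    (hasDerivAt_id u).div (h2.const_mul 2) (by positivity)
  have h4 := (Real.hasDerivAt_arsinh u).sub (((hasDerivAt_id u).div_const 2).add h3)
  refine h4.congr_deriv ?_
  rw [show (1:ℝ) + u ^ 2 = u ^ 2 + 1 by ring, ← hs]
  field_simp
  linear_combination (-s) * hs2

private lemma hd2 (u : ℝ) :
    HasDerivAt (fun x : ℝ => 2 * x / Real.sqrt (x ^ 2 + 4) - Real.arsinh x)
      (8 / Real.sqrt (u ^ 2 + 4) ^ 3 - (Real.sqrt (u ^ 2 + 1))⁻¹) u := by
  set t := Real.sqrt (u ^ 2 + 4) with ht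
  have htp : 0 < t := Real.sqrt_pos.2 (by positivity)
  have ht2 : t ^ 2 = u ^ 2 + 4 := Real.sq_sqrt (by positivity)
  have h1 : HasDerivAt (fun x : ℝ => x ^ 2 + 4) (2 * u) u := by
    simpa using (hasDerivAt_pow 2 u).add_const 4
  have h2 : HasDerivAt (fun x : ℝ => Real.sqrt (x ^ 2 + 4)) (u / t) u := by
    have := (Real.hasDerivAt_sqrt (by positivity : (u^2+4) ≠ 0)).comp u h1
    refine this.congr_deriv ?_
    rw [← ht]; field_simp
  have h3 := ((hasDerivAt_id u).const_mul 2).div h2 htp.ne'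
  have h4 := h3.sub (Real.hasDerivAt_arsinh u)
  refine h4.congr_deriv ?_
  field_simp
  simp only [show (1:ℝ) + u ^ 2 = u ^ 2 + 1 from by ring, id_eq]
  linear_combination (Real.sqrt (u^2+1)^2*(2*t^2)) * ht2

theorem stmt_17 :
    ∀ u ∈ Set.Ioo (0:ℝ) 1,
      u / 2 + u / (2 * Real.sqrt (u ^ 2 + 1)) ≤ Real.arsinh u ∧
      Real.arsinh u ≤ 2 * u / Real.sqrt (u ^ 2 + 4) := by
  intro u hu
  obtain ⟨hu0, hu1⟩ := hu
  constructor
  · set F : ℝ → ℝ := fun x => Real.arsinh x - (x / 2 + x / (2 * Real.sqrt (x ^ 2 + 1))) with hF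
    have cont : ContinuousOn F (Icc 0 1) := fun x _ => ((hd1 x).continuousAt).continuousWithinAt
    have mono : StrictMonoOn F (Icc 0 1) := by
      apply strictMonoOn_of_deriv_pos (convex_Icc 0 1) cont
      intro x hx
      rw [interior_Icc] at hx
      rw [(hd1 x).deriv]
      have hsp : 0 < Real.sqrt (x ^ 2 + 1) := Real.sqrt_pos.2 (by positivity)
      have hs2 : Real.sqrt (x ^ 2 + 1) ^ 2 = x ^ 2 + 1 := Real.sq_sqrt (by positivity)
      have hs1 : 1 < Real.sqrt (x ^ 2 + 1) := by
        nlinarith [hx.1, mul_pos hx.1 hx.1, sq_nonneg (Real.sqrt (x ^ 2 + 1) - 1)]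
      have h2 : x ^ 2 < Real.sqrt (x ^ 2 + 1) := by nlinarith [hx.1, hx.2]
      exact div_pos (mul_pos (sub_pos.2 hs1) (sub_pos.2 h2)) (by positivity)
    have key := mono (left_mem_Icc.2 zero_le_one) ⟨hu0.le, hu1.le⟩ hu0
    have hF0 : F 0 = 0 := by simp [hF]
    rw [hF0] at key
    simp only [hF] at key
    linarith
  · set G : ℝ → ℝ := fun x => 2 * x / Real.sqrt (x ^ 2 + 4) - Real.arsinh x with hG
    have cont : ContinuousOn G (Icc 0 1) := fun x _ => ((hd2 x).continuousAt).continuousWithinAt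
    have mono : StrictMonoOn G (Icc 0 1) := by
      apply strictMonoOn_of_deriv_pos (convex_Icc 0 1) cont
      intro x hx
      rw [interior_Icc] at hx
      rw [(hd2 x).deriv]
      set s := Real.sqrt (x ^ 2 + 1) with hsdef
      set t := Real.sqrt (x ^ 2 + 4) with htdef
      have hsp : 0 < s := Real.sqrt_pos.2 (by positivity)
      have htp : 0 < t := Real.sqrt_pos.2 (by positivity)
      have hs2 : s ^ 2 = x ^ 2 + 1 := Real.sq_sqrt (by positivity)
      have ht2 : t ^ 2 = x ^ 2 + 4 := Real.sq_sqrt (by positivity)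
      have hx2 : x ^ 2 < 1 := by nlinarith [hx.1, hx.2]
      have ht6 : (t ^ 3) ^ 2 = (x ^ 2 + 4) ^ 3 := by rw [← ht2]; ring
      have hsq : (t ^ 3) ^ 2 < (8 * s) ^ 2 := by
        have hpos : 0 < x ^ 2 * (16 - x ^ 4 - 12 * x ^ 2) := by
          apply mul_pos (pow_pos hx.1 2)
          nlinarith [hx2, sq_nonneg x, sq_nonneg (x^2)]
        nlinarith [ht6, hs2]
      have key : t ^ 3 < 8 * s := lt_of_pow_lt_pow_left₀ 2 (by positivity) hsq
      rw [sub_pos, inv_eq_one_div, div_lt_div_iff₀ hsp (by positivity)]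
      linarith
    have key := mono (left_mem_Icc.2 zero_le_one) ⟨hu0.le, hu1.le⟩ hu0
    have hG0 : G 0 = 0 := by simp [hG]
    rw [hG0] at key
    simp only [hG] at key
    linarith
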